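/- For all integers k > ℓ ≥ 2 and every fixed ε > 0, if p = p(n) satisfies p ≤ (1−ε)·e^{k−ℓ}/n^{k−ℓ}, then the probability that H_{n,p}^{(k)} is ℓ-Hamiltonian tends to 0 as n → ∞ (along n divisible by k−ℓ). -/

import Mathlib

open MeasureTheory Finset Filter Topology

/-- The sample space of the random `k`-uniform hypergraph on vertex set `Fin n`:
a Boolean indicator for each `k`-element subset of the vertices. -/
abbrev HGraph (n k : ℕ) := {e : Finset (Fin n) // e.card = k} → Bool

/-- The distribution of `H_{n,p}^{(k)}`: the product over all `k`-subsets of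
independent Bernoulli(p) coordinates. -/
noncomputable def hyperMeasure (n k : ℕ) (p : ℝ) : Measure (HGraph n k) :=
  Measure.pi fun _ => (PMF.bernoulli (min 1 (Real.toNNReal p)) (min_le_left _ _)).toMeasure

/-- `e` is an edge of the hypergraph `ω`. -/
def isEdge {n k : ℕ} (ω : HGraph n k) (e : Finset (Fin n)) : Prop :=
  ∃ h : e.card = k, ω ⟨e, h⟩ = true

/-- The vertex of `Fin n` with index `a` modulo `n` (as a singleton finset, empty if `n = 0`). -/
def cvtx (n a : ℕ) : Finset (Fin n) :=
  if h : 0 < n then {⟨a % n, Nat.mod_lt a h⟩} else ∅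

/-- The `i`-th edge `E_π(i) = {π(i·g + j) : j < k}` (positions mod `n`) of the cycle induced by
the permutation `π`, where `g = k - ℓ`. -/
def cycEdge (n k g : ℕ) (π : Equiv.Perm (Fin n)) (i : ℕ) : Finset (Fin n) :=
  (Finset.range k).biUnion fun j => (cvtx n (i * g + j)).image π

/-- `π` is an `ℓ`-overlapping Hamilton cycle inducing permutation for `ω`. -/
def Hamperm (n k l : ℕ) (ω : HGraph n k) (π : Equiv.Perm (Fin n)) : Prop :=
  ∀ i < n / (k - l), isEdge ω (cycEdge n k (k - l) π i)

/-- `ω` contains an `ℓ`-overlapping Hamilton cycle. -/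
def IsEllHamiltonian (n k l : ℕ) (ω : HGraph n k) : Prop :=
  ∃ π : Equiv.Perm (Fin n), Hamperm n k l ω π



lemma key_e (n : ℕ) (hn : 1 ≤ n) :
    Real.exp 1 * (n:ℝ)^(n+1) ≤ ((n:ℝ)+1)^(n+1) := by
  have hn0 : (0:ℝ) < n := by exact_mod_cast hn
  have h1 : Real.exp (1/((n:ℝ)+1)) ≤ ((n:ℝ)+1)/n := by
    have h2 : (1:ℝ) - 1/((n:ℝ)+1) ≤ Real.exp (-(1/((n:ℝ)+1))) := by
      have := Real.add_one_le_exp (-(1/((n:ℝ)+1)))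
      linarith
    have h3 : (0:ℝ) < 1 - 1/((n:ℝ)+1) := by
      rw [sub_pos, div_lt_one (by positivity)]; linarith
    rw [Real.exp_neg] at h2
    have h4 : Real.exp (1/((n:ℝ)+1)) ≤ (1 - 1/((n:ℝ)+1))⁻¹ := by
      rw [le_inv_comm₀ (Real.exp_pos _) h3]
      exact h2
    refine h4.trans (le_of_eq ?_)
    field_simp
    rw [add_sub_cancel_right, div_self hn0.ne']
  have h5 : Real.exp 1 ≤ (((n:ℝ)+1)/n)^(n+1) := by
    calc Real.exp 1 = Real.exp (1/((n:ℝ)+1)) ^ (n+1) := by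
          rw [← Real.exp_nat_mul]; congr 1; field_simp; norm_cast
      _ ≤ (((n:ℝ)+1)/n)^(n+1) :=
          pow_le_pow_left₀ (Real.exp_pos _).le h1 _
  calc Real.exp 1 * (n:ℝ)^(n+1) ≤ (((n:ℝ)+1)/n)^(n+1) * (n:ℝ)^(n+1) := by
        exact mul_le_mul_of_nonneg_right h5 (by positivity)
    _ = ((n:ℝ)+1)^(n+1) := by
        rw [div_pow, div_mul_cancel₀]
        positivity

lemma fact_bound : ∀ n : ℕ, 1 ≤ n → (n.factorial : ℝ) * Real.exp 1 ^ n ≤ Real.exp 1 * (n:ℝ)^(n+1)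
  | 0, h => by omega
  | 1, _ => by norm_num [Nat.factorial]
  | (n+2), _ => by
    have ih := fact_bound (n+1) (by omega)
    have hk := key_e (n+1) (by omega)
    push_cast at hk ih ⊢
    have he := Real.exp_pos 1
    have hk' : Real.exp 1 * ((n:ℝ)+1)^(n+2) ≤ ((n:ℝ)+2)^(n+2) := by
      calc Real.exp 1 * ((n:ℝ)+1)^(n+2) ≤ (((n:ℝ)+1)+1)^(n+1+1) := hk
        _ = ((n:ℝ)+2)^(n+2) := by ring_nf
    have h1 : ((n+2).factorial : ℝ) = ((n:ℝ)+2) * ((n+1).factorial : ℝ) := by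
      rw [Nat.factorial_succ]; push_cast; ring
    have hf : (0:ℝ) ≤ ((n+1).factorial : ℝ) := by positivity
    calc ((n+2).factorial : ℝ) * Real.exp 1 ^ (n+2)
        = (((n:ℝ)+2) * Real.exp 1) * (((n+1).factorial : ℝ) * Real.exp 1 ^ (n+1)) := by
          rw [h1]; push_cast; ring
      _ ≤ (((n:ℝ)+2) * Real.exp 1) * (Real.exp 1 * ((n:ℝ)+1)^(n+1+1)) := by
          apply mul_le_mul_of_nonneg_left ih (by positivity)
      _ = ((n:ℝ)+2) * (Real.exp 1 * (Real.exp 1 * ((n:ℝ)+1)^(n+2))) := by ring_nf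
      _ ≤ ((n:ℝ)+2) * (Real.exp 1 * ((n:ℝ)+2)^(n+2)) := by
          apply mul_le_mul_of_nonneg_left (mul_le_mul_of_nonneg_left hk' he.le) (by positivity)
      _ = Real.exp 1 * ((n:ℝ)+2)^(n+2+1) := by ring

lemma cycEdge_eq (n k g : ℕ) (hn : 0 < n) (π : Equiv.Perm (Fin n)) (i : ℕ) :
    cycEdge n k g π i =
      (Finset.range k).image (fun j => π ⟨(i*g+j) % n, Nat.mod_lt _ hn⟩) := by
  ext x
  simp [cycEdge, cvtx, hn, eq_comm]

lemma mod_inj_aux {n a b c : ℕ} (ha : a < n) (hb : b < n)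
    (h : (c+a) % n = (c+b) % n) : a = b := by
  have h2 : a ≡ b [MOD n] := Nat.ModEq.add_left_cancel' c h
  rw [Nat.ModEq, Nat.mod_eq_of_lt ha, Nat.mod_eq_of_lt hb] at h2
  exact h2

lemma cycEdge_card (n k g : ℕ) (hk : k ≤ n) (hn : 0 < n) (π : Equiv.Perm (Fin n)) (i : ℕ) :
    (cycEdge n k g π i).card = k := by
  rw [cycEdge_eq n k g hn π i]
  rw [Finset.card_image_of_injOn, Finset.card_range]
  intro a ha b hb hab
  simp only [Finset.coe_range, Set.mem_Iio] at ha hb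
  exact mod_inj_aux (lt_of_lt_of_le ha hk) (lt_of_lt_of_le hb hk)
    (congrArg Fin.val (π.injective hab))

lemma mod_cases_aux {n a j b : ℕ} (ha : a < n) (hj : j ≤ n)
    (h : (a+j) % n = b) : b = a + j ∨ b + n = a + j := by
  rcases Nat.lt_or_ge (a+j) n with h' | h'
  · left; rw [Nat.mod_eq_of_lt h'] at h; omega
  · right
    rw [Nat.mod_eq_sub_mod h', Nat.mod_eq_of_lt (by omega)] at h
    omega

lemma cycEdge_inj (n k g : ℕ) (hg : 0 < g) (hk : 0 < k) (h2k : 2*k ≤ n)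
    (π : Equiv.Perm (Fin n)) {i i' : ℕ} (hi : i < n / g) (hi' : i' < n / g)
    (h : cycEdge n k g π i = cycEdge n k g π i') : i = i' := by
  have hn : 0 < n := by omega
  have hdm : n / g * g ≤ n := Nat.div_mul_le_self n g
  have ha : i * g + g ≤ n := by
    calc i * g + g = (i+1) * g := by ring
      _ ≤ (n/g) * g := Nat.mul_le_mul_right g hi
      _ ≤ n := hdm
  have hb : i' * g + g ≤ n := by
    calc i' * g + g = (i'+1) * g := by ring
      _ ≤ (n/g) * g := Nat.mul_le_mul_right g hi'
      _ ≤ n := hdm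
  rw [cycEdge_eq n k g hn π i, cycEdge_eq n k g hn π i'] at h
  have him : ((Finset.range k).image
        (fun j => (⟨(i*g+j) % n, Nat.mod_lt _ hn⟩ : Fin n))).image π
      = ((Finset.range k).image
        (fun j => (⟨(i'*g+j) % n, Nat.mod_lt _ hn⟩ : Fin n))).image π := by
    rw [Finset.image_image, Finset.image_image]; exact h
  have hP := Finset.image_injective π.injective him
  -- membership both ways
  have m1 : (⟨(i'*g+0) % n, Nat.mod_lt _ hn⟩ : Fin n) ∈
      (Finset.range k).image (fun j => (⟨(i*g+j) % n, Nat.mod_lt _ hn⟩ : Fin n)) := by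
    rw [hP]; exact Finset.mem_image_of_mem _ (Finset.mem_range.2 hk)
  have m2 : (⟨(i*g+0) % n, Nat.mod_lt _ hn⟩ : Fin n) ∈
      (Finset.range k).image (fun j => (⟨(i'*g+j) % n, Nat.mod_lt _ hn⟩ : Fin n)) := by
    rw [← hP]; exact Finset.mem_image_of_mem _ (Finset.mem_range.2 hk)
  obtain ⟨j, hj, hje⟩ := Finset.mem_image.1 m1
  obtain ⟨j', hj', hje'⟩ := Finset.mem_image.1 m2
  rw [Finset.mem_range] at hj hj'
  have e1 : (i*g+j) % n = (i'*g+0) % n := congrArg Fin.val hje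
  have e2 : (i'*g+j') % n = (i*g+0) % n := congrArg Fin.val hje'
  have hlt1 : i' * g < n := by omega
  have hlt2 : i * g < n := by omega
  rw [Nat.add_zero, Nat.mod_eq_of_lt hlt1] at e1
  rw [Nat.add_zero, Nat.mod_eq_of_lt hlt2] at e2
  have hjn : j ≤ n := by omega
  have hjn' : j' ≤ n := by omega
  have c1 := mod_cases_aux hlt2 hjn e1
  have c2 := mod_cases_aux hlt1 hjn' e2
  have : i * g = i' * g := by omega
  exact Nat.eq_of_mul_eq_mul_right hg this

lemma measure_hamperm_le (n k l : ℕ) (hlk : l < k) (hl : 1 ≤ l) (h2k : 2*k ≤ n)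
    (hd : (k - l) ∣ n) (p : ℝ) (π : Equiv.Perm (Fin n)) :
    hyperMeasure n k p {ω | Hamperm n k l ω π}
      ≤ ((min 1 (Real.toNNReal p) : NNReal) : ENNReal) ^ (n / (k - l)) := by
  set g := k - l with hgdef
  have hg : 0 < g := by omega
  have hk : 0 < k := by omega
  have hn : 0 < n := by omega
  have hkn : k ≤ n := by omega
  set q := min 1 (Real.toNNReal p) with hq
  set ν := (PMF.bernoulli q (min_le_left _ _)).toMeasure with hν
  set m := n / g with hm
  have edgeC : ∀ i, (cycEdge n k g π i).card = k := fun i => cycEdge_card n k g hkn hn π i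
  set T : Finset {e : Finset (Fin n) // e.card = k} :=
    (Finset.range m).image (fun i => (⟨cycEdge n k g π i, edgeC i⟩ :
      {e : Finset (Fin n) // e.card = k})) with hT
  set S : {e : Finset (Fin n) // e.card = k} → Set Bool :=
    fun c => if c ∈ T then {true} else Set.univ with hS
  have hsub : {ω : HGraph n k | Hamperm n k l ω π} ⊆ Set.pi Set.univ S := by
    intro ω hω
    rw [Set.mem_pi]
    intro c _
    by_cases hc : c ∈ T
    · simp only [hS, if_pos hc]
      obtain ⟨i, hi, rfl⟩ := Finset.mem_image.1 hc
      rw [Finset.mem_range] at hi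
      obtain ⟨he, hte⟩ := hω i hi
      have : (⟨cycEdge n k g π i, edgeC i⟩ : {e : Finset (Fin n) // e.card = k})
          = ⟨cycEdge n k g π i, he⟩ := rfl
      rw [this]
      exact hte
    · simp [hS, if_neg hc]
  have hTcard : T.card = m := by
    rw [hT, Finset.card_image_of_injOn, Finset.card_range]
    intro a ha b hb hab
    simp only [Finset.coe_range, Set.mem_Iio] at ha hb
    exact cycEdge_inj n k g hg hk h2k π ha hb (congrArg Subtype.val hab)
  calc hyperMeasure n k p {ω | Hamperm n k l ω π}
      ≤ hyperMeasure n k p (Set.pi Set.univ S) := measure_mono hsub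
    _ = ∏ c, ν (S c) := Measure.pi_pi _ _
    _ = ∏ c, (if c ∈ T then (q : ENNReal) else 1) := by
        apply Finset.prod_congr rfl
        intro c _
        by_cases hc : c ∈ T
        · rw [hS]; simp only [if_pos hc]
          rw [hν, PMF.toMeasure_apply_singleton _ _ (measurableSet_singleton _)]
          rfl
        · rw [hS]; simp only [if_neg hc]
          exact measure_univ
    _ = (q : ENNReal) ^ m := by
        rw [Finset.prod_ite_mem, Finset.univ_inter, Finset.prod_const, hTcard]
    _ ≤ (q : ENNReal) ^ (n / g) := le_of_eq rfl

lemma measure_isham_le (n k l : ℕ) (hlk : l < k) (hl : 1 ≤ l) (h2k : 2*k ≤ n)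
    (hd : (k - l) ∣ n) (p : ℝ) :
    hyperMeasure n k p {ω | IsEllHamiltonian n k l ω}
      ≤ (Nat.factorial n : ENNReal) * ((min 1 (Real.toNNReal p) : NNReal) : ENNReal) ^ (n / (k - l)) := by
  have h1 : {ω : HGraph n k | IsEllHamiltonian n k l ω}
      = ⋃ π : Equiv.Perm (Fin n), {ω | Hamperm n k l ω π} := by
    ext ω; simp [IsEllHamiltonian]
  rw [h1]
  calc hyperMeasure n k p (⋃ π : Equiv.Perm (Fin n), {ω | Hamperm n k l ω π})
      ≤ ∑' π : Equiv.Perm (Fin n), hyperMeasure n k p {ω | Hamperm n k l ω π} :=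
        measure_iUnion_le _
    _ = ∑ π : Equiv.Perm (Fin n), hyperMeasure n k p {ω | Hamperm n k l ω π} :=
        tsum_fintype _
    _ ≤ ∑ _π : Equiv.Perm (Fin n), ((min 1 (Real.toNNReal p) : NNReal) : ENNReal) ^ (n / (k - l)) :=
        Finset.sum_le_sum fun π _ => measure_hamperm_le n k l hlk hl h2k hd p π
    _ = (Fintype.card (Equiv.Perm (Fin n)) : ENNReal) * ((min 1 (Real.toNNReal p) : NNReal) : ENNReal) ^ (n / (k - l)) := by
        rw [Finset.sum_const, Finset.card_univ, nsmul_eq_mul]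
    _ = (Nat.factorial n : ENNReal) * ((min 1 (Real.toNNReal p) : NNReal) : ENNReal) ^ (n / (k - l)) := by
        rw [Fintype.card_perm, Fintype.card_fin]


lemma real_bound (n g : ℕ) (hn : 1 ≤ n) (hg : 0 < g) (hd : g ∣ n) (r : ℝ) (hr0 : 0 ≤ r)
    (hfact : (n.factorial : ℝ) * Real.exp 1 ^ n ≤ Real.exp 1 * (n:ℝ)^(n+1)) :
    (n.factorial : ℝ) * (r * Real.exp 1 ^ g / (n:ℝ)^g)^(n/g)
      ≤ Real.exp 1 * n * r^(n/g) := by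
  set m := n / g with hm
  have hmg : g * m = n := Nat.mul_div_cancel' hd
  have hnn : (0:ℝ) < (n:ℝ)^n := by positivity
  have h1 : (r * Real.exp 1 ^ g / (n:ℝ)^g)^m = r^m * Real.exp 1 ^ n / (n:ℝ)^n := by
    rw [div_pow, mul_pow, ← pow_mul, ← pow_mul, hmg]
  rw [h1]
  rw [mul_div_assoc']
  rw [div_le_iff₀ hnn]
  have h2 : (n.factorial : ℝ) * (r ^ m * Real.exp 1 ^ n)
      = ((n.factorial : ℝ) * Real.exp 1 ^ n) * r ^ m := by ring
  rw [h2]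
  calc ((n.factorial : ℝ) * Real.exp 1 ^ n) * r ^ m
      ≤ (Real.exp 1 * (n:ℝ)^(n+1)) * r ^ m :=
        mul_le_mul_of_nonneg_right hfact (by positivity)
    _ = Real.exp 1 * (n:ℝ) * r ^ m * (n:ℝ)^n := by rw [pow_succ]; ring

lemma geom_decay (g : ℕ) (hg : 0 < g) (r : ℝ) (hr0 : 0 ≤ r) (hr1 : r < 1) :
    Tendsto (fun n : ℕ => Real.exp 1 * n * r ^ (n / g)) atTop (𝓝 0) := by
  have hnorm : ‖r‖ < 1 := by rwa [Real.norm_eq_abs, abs_of_nonneg hr0]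
  have t1 : Tendsto (fun m : ℕ => (m:ℝ) * r ^ m) atTop (𝓝 0) := by
    have := (summable_pow_mul_geometric_of_norm_lt_one 1 hnorm).tendsto_atTop_zero
    simpa using this
  have t2 : Tendsto (fun m : ℕ => r ^ m) atTop (𝓝 0) :=
    tendsto_pow_atTop_nhds_zero_of_lt_one hr0 hr1
  have th : Tendsto (fun m : ℕ => Real.exp 1 * g * ((m:ℝ) * r ^ m + r ^ m)) atTop (𝓝 0) := by
    have := ((t1.add t2).const_mul (Real.exp 1 * g))
    simpa using this
  have hdiv : Tendsto (fun n : ℕ => n / g) atTop atTop :=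
    le_of_eq (map_div_atTop_eq_nat g hg)
  have comp := th.comp hdiv
  apply tendsto_of_tendsto_of_tendsto_of_le_of_le tendsto_const_nhds comp
  · intro n; positivity
  · intro n
    simp only [Function.comp_apply]
    have hmod := Nat.div_add_mod n g
    have hlt := Nat.mod_lt n hg
    have hle : (n:ℝ) ≤ g * ((n / g : ℕ) + 1) := by
      have : n ≤ g * (n / g + 1) := by
        have : g * (n/g) + n % g = n := hmod
        nlinarith [Nat.mod_lt n hg]
      exact_mod_cast this
    have hrp : (0:ℝ) ≤ r ^ (n/g) := by positivity
    calc Real.exp 1 * n * r ^ (n/g)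
        ≤ Real.exp 1 * (g * ((n / g : ℕ) + 1)) * r ^ (n/g) := by
          apply mul_le_mul_of_nonneg_right _ hrp
          exact mul_le_mul_of_nonneg_left hle (Real.exp_pos 1).le
      _ = Real.exp 1 * g * (((n / g : ℕ):ℝ) * r ^ (n/g) + r ^ (n/g)) := by ring

/-- For all integers `k > ℓ ≥ 2` and fixed `ε > 0`, if
`p(n) ≤ (1-ε)·e^{k-ℓ}/n^{k-ℓ}`, then whp `H_{n,p}^{(k)}` is not `ℓ`-Hamiltonian
(along `n` divisible by `k - ℓ`). -/

theorem statement_0 (k l : ℕ) (hl : 2 ≤ l) (hlk : l < k) (ε : ℝ) (hε : 0 < ε)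
    (p : ℕ → ℝ) (hp0 : ∀ n, 0 ≤ p n)
    (hpu : ∀ n : ℕ, p n ≤ (1 - ε) * Real.exp 1 ^ (k - l) / (n : ℝ) ^ (k - l)) :
    Tendsto (fun n => hyperMeasure n k (p n) {ω | IsEllHamiltonian n k l ω})
      (atTop ⊓ 𝓟 {n | (k - l) ∣ n}) (𝓝 0) := by
  set g := k - l with hgdef
  have hg : 0 < g := by omega
  set r : ℝ := max 0 (1 - ε) with hrdef
  have hr0 : 0 ≤ r := le_max_left _ _
  have hr1 : r < 1 := max_lt one_pos (by linarith)
  set F := atTop ⊓ 𝓟 {n | g ∣ n} with hF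
  -- the upper bound function
  set B : ℕ → ENNReal := fun n => ENNReal.ofReal (Real.exp 1 * n * r ^ (n / g)) with hB
  have hBtendsto : Tendsto B F (𝓝 0) := by
    have hreal : Tendsto (fun n : ℕ => Real.exp 1 * n * r ^ (n / g)) F (𝓝 0) :=
      (geom_decay g hg r hr0 hr1).mono_left inf_le_left
    have := (ENNReal.tendsto_ofReal hreal)
    simpa using this
  have hupper : ∀ᶠ n in F, hyperMeasure n k (p n) {ω | IsEllHamiltonian n k l ω} ≤ B n := by
    rw [hF, eventually_inf_principal]
    filter_upwards [eventually_ge_atTop (2*k)] with n h2k hdvd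
    have hn1 : 1 ≤ n := by omega
    have hn0 : (0:ℝ) < n := by exact_mod_cast (by omega : 0 < n)
    -- bound on p n
    have hx0 : 0 ≤ r * Real.exp 1 ^ g / (n:ℝ)^g := by positivity
    have hple : p n ≤ r * Real.exp 1 ^ g / (n:ℝ)^g := by
      refine (hpu n).trans ?_
      rw [mul_div_assoc, mul_div_assoc]
      exact mul_le_mul_of_nonneg_right (le_max_right _ _) (by positivity)
    have hq : ((min 1 (Real.toNNReal (p n)) : NNReal) : ENNReal) ≤ ENNReal.ofReal (r * Real.exp 1 ^ g / (n:ℝ)^g) :=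
      ENNReal.coe_le_coe.2 (le_trans (min_le_right _ _) (Real.toNNReal_le_toNNReal hple))
    calc hyperMeasure n k (p n) {ω | IsEllHamiltonian n k l ω}
        ≤ (Nat.factorial n : ENNReal) * ((min 1 (Real.toNNReal (p n)) : NNReal) : ENNReal) ^ (n / g) :=
          measure_isham_le n k l hlk (by omega) h2k hdvd (p n)
      _ ≤ (Nat.factorial n : ENNReal)
            * (ENNReal.ofReal (r * Real.exp 1 ^ g / (n:ℝ)^g)) ^ (n / g) := by
          exact mul_le_mul_right (pow_le_pow_left' hq _) _
      _ = ENNReal.ofReal ((Nat.factorial n : ℝ)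
            * (r * Real.exp 1 ^ g / (n:ℝ)^g) ^ (n / g)) := by
          rw [ENNReal.ofReal_mul (by positivity), ← ENNReal.ofReal_pow hx0,
            ENNReal.ofReal_natCast]
      _ ≤ B n := by
          apply ENNReal.ofReal_le_ofReal
          exact real_bound n g hn1 hg hdvd r hr0 (fact_bound n hn1)
  exact tendsto_of_tendsto_of_tendsto_of_le_of_le' tendsto_const_nhds hBtendsto
    (Eventually.of_forall fun n => bot_le) hupper
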